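/- Let L be a p/q-changemaker lattice with p > q ≥ 2, suppose σ_i ≥ 1 for all 1 ≤ i ≤ t, and let ι : Λ(G) → L be an isomorphism of lattices from the graph lattice of a finite connected multigraph G without self-loops onto L. If x = ι(Σ_{u∈R} ū) for some subset R of the vertex set of G (where ū denotes the class in Λ(G) of the characteristic vector of the vertex u), then |x·f_1| ≤ 2. -/

import Mathlib

/-- The negative continued fraction `[b_0, …, b_n]⁻ = b_0 - 1/[b_1, …, b_n]⁻`. -/
def cfMinus : List ℚ → ℚ
  | [] => 0
  | [b] => b
  | b :: c :: rest => b - 1 / cfMinus (c :: rest)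

/-- The standard inner product on `ℤ^ι`. -/
def dot {ι : Type*} [Fintype ι] (x y : ι → ℤ) : ℤ := ∑ i, x i * y i

/-- The basis vector `f_i` (indices shifted: `fvec t s i` is `f_{i+1}`). -/
def fvec (t s : ℕ) (i : Fin t) : Fin t ⊕ Fin (s + 1) → ℤ := Pi.single (Sum.inl i) 1

/-- The basis vector `e_j`, `0 ≤ j ≤ s`. -/
def evec (t s : ℕ) (j : Fin (s + 1)) : Fin t ⊕ Fin (s + 1) → ℤ := Pi.single (Sum.inr j) 1

/-- The changemaker vector `w_0 = e_0 + σ_1 f_1 + ⋯ + σ_t f_t`. -/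
def w0 (t s : ℕ) (σ : Fin t → ℤ) : Fin t ⊕ Fin (s + 1) → ℤ :=
  Sum.elim σ fun j => if (j : ℕ) = 0 then 1 else 0

/-- The vector `w_k = -e_{m_{k-1}} + e_{m_{k-1}+1} + ⋯ + e_{m_k}` for `k ≥ 1`. -/
def wk (t s : ℕ) (m : ℕ → ℕ) (k : ℕ) : Fin t ⊕ Fin (s + 1) → ℤ :=
  Sum.elim 0 fun j =>
    if (j : ℕ) = m (k - 1) then -1
    else if m (k - 1) < (j : ℕ) ∧ (j : ℕ) ≤ m k then 1 else 0

/-- The vectors `w_0, w_1, …, w_l`. -/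
def wvec (t s : ℕ) (σ : Fin t → ℤ) (m : ℕ → ℕ) (k : ℕ) : Fin t ⊕ Fin (s + 1) → ℤ :=
  if k = 0 then w0 t s σ else wk t s m k

/-- The `p/q`-changemaker lattice `L = ⟨w_0, …, w_l⟩^⊥ ⊆ ℤ^{t+s+1}`. -/
def Lset (t s l : ℕ) (σ : Fin t → ℤ) (m : ℕ → ℕ) : Set (Fin t ⊕ Fin (s + 1) → ℤ) :=
  {x | ∀ k ≤ l, dot x (wvec t s σ m k) = 0}

/-- The fractional part `L_F = ⟨w_1, …, w_l⟩^⊥ ∩ ⟨e_0, …, e_s⟩`. -/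
def LFset (t s l : ℕ) (m : ℕ → ℕ) : Set (Fin t ⊕ Fin (s + 1) → ℤ) :=
  {x | (∀ i, x (Sum.inl i) = 0) ∧ ∀ k, 1 ≤ k → k ≤ l → dot x (wk t s m k) = 0}

/-- The index set `M = {0, 1, …, s} ∖ {m_0, m_1, …, m_l}`. -/
def Mset (s l : ℕ) (m : ℕ → ℕ) : Finset ℕ :=
  (Finset.range (s + 1)).filter fun j => ∀ k ≤ l, j ≠ m k

/-- The least element of `M` (equal to `s` if `M = ∅`). -/
def minM (s l : ℕ) (m : ℕ → ℕ) : ℕ :=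
  if h : (Mset s l m).Nonempty then (Mset s l m).min' h else s

/-- For `k ∈ M`, the least element `k'` of `M` greater than `k`; equal to `s`
if no such element exists. -/
def nxt (s l : ℕ) (m : ℕ → ℕ) (k : ℕ) : ℕ :=
  if h : ((Mset s l m).filter fun j => k < j).Nonempty then
    ((Mset s l m).filter fun j => k < j).min' h
  else s

/-- `v_0 = e_0 + e_1 + ⋯ + e_{min M}` (equal to `e_0 + ⋯ + e_s` if `M = ∅`). -/
def v0vec (t s l : ℕ) (m : ℕ → ℕ) : Fin t ⊕ Fin (s + 1) → ℤ :=
  Sum.elim 0 fun j => if (j : ℕ) ≤ minM s l m then 1 else 0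

/-- `v'_k = -e_k + e_{k+1} + ⋯ + e_{k'}` for `k ∈ M`. -/
def vKvec (t s l : ℕ) (m : ℕ → ℕ) (k : ℕ) : Fin t ⊕ Fin (s + 1) → ℤ :=
  Sum.elim 0 fun j =>
    if (j : ℕ) = k then -1
    else if k < (j : ℕ) ∧ (j : ℕ) ≤ nxt s l m k then 1 else 0

/-- The sequence `v_0, v_1, …, v_m` (`m = |M|`): `v_0` as above, and
`v_1, …, v_m` are the vectors `v'_k`, `k ∈ M`, in increasing order of `k`. -/
def vSeq (t s l : ℕ) (m : ℕ → ℕ) (i : ℕ) : Fin t ⊕ Fin (s + 1) → ℤ :=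
  if i = 0 then v0vec t s l m
  else vKvec t s l m (((Mset s l m).sort (· ≤ ·)).getD (i - 1) 0)

/-- `x_F = Σ_{j=0}^s (x·e_j) e_j`, the projection to the span of the `e_j`. -/
def Fpart (t s : ℕ) (x : Fin t ⊕ Fin (s + 1) → ℤ) : Fin t ⊕ Fin (s + 1) → ℤ :=
  ∑ j, dot x (evec t s j) • evec t s j

/-- `z` is irreducible in the lattice `S`: there are no nonzero `x, y ∈ S`
with `z = x + y` and `x·y ≥ 0`. -/
def IrredIn {ι : Type*} [Fintype ι] (S : Set (ι → ℤ)) (z : ι → ℤ) : Prop :=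
  ¬ ∃ x y : ι → ℤ, x ∈ S ∧ y ∈ S ∧ x ≠ 0 ∧ y ≠ 0 ∧ z = x + y ∧ 0 ≤ dot x y

/-- The data `(t, s, l, a, m, σ)` presents the `p/q`-changemaker lattice
`⟨w_0, …, w_l⟩^⊥ ⊆ ℤ^{t+s+1}`, where `p/q = n − r/q = [a_0, a_1, …, a_l]⁻` with
`a_0 = n`, `a_k ≥ 2` for `1 ≤ k ≤ l`; `m_0 = 0`, `m_k = a_1 + ⋯ + a_k − k`,
`s = m_l`; and `(σ_1, …, σ_t)` is a nondecreasing tuple of nonnegative integers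
satisfying the changemaker condition with `w_0·w_0 = 1 + Σ σ_i² = n`. -/
structure IsCMLattice (p q n r : ℤ) (t s l : ℕ) (a : ℕ → ℤ) (m : ℕ → ℕ)
    (σ : Fin t → ℤ) : Prop where
  hq2 : 2 ≤ q
  hqp : q < p
  hgcd : Int.gcd p q = 1
  hp : p = n * q - r
  hr0 : 0 < r
  hrq : r < q
  ha0 : a 0 = n
  hak : ∀ k, 1 ≤ k → k ≤ l → 2 ≤ a k
  hcf : cfMinus ((List.range (l + 1)).map fun i => (a i : ℚ)) = (p : ℚ) / (q : ℚ)
  hm0 : m 0 = 0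
  hmrec : ∀ k, 1 ≤ k → k ≤ l → (m k : ℤ) = (m (k - 1) : ℤ) + a k - 1
  hs : s = m l
  hσ0 : ∀ i, 0 ≤ σ i
  hσmono : Monotone σ
  hσcm : ∀ i : Fin t, σ i ≤ (∑ j ∈ Finset.univ.filter (· < i), σ j) + 1
  hσn : 1 + ∑ i, σ i ^ 2 = n

/-- The bilinear form of the multigraph with edge multiplicities `ε`:
`x·y = Σ_v d(v) x_v y_v − Σ_{v≠w} ε(v,w) x_v y_w`, where `d(v) = Σ_w ε(v,w)`. -/
def gform {V : Type*} [Fintype V] [DecidableEq V] (ε : V → V → ℕ) (x y : V → ℤ) : ℤ :=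
  (∑ v, (∑ w, (ε v w : ℤ)) * (x v * y v)) -
    ∑ v, ∑ w ∈ Finset.univ.filter (· ≠ v), (ε v w : ℤ) * (x v * y w)

/-- The simple graph underlying the multigraph with edge multiplicities `ε`. -/
def gGraph {V : Type*} (ε : V → V → ℕ) : SimpleGraph V :=
  SimpleGraph.fromRel (fun v w => 0 < ε v w)

/-- Connectivity of the sub-multigraph induced on the set `S`. -/
def gConnOn {V : Type*} (ε : V → V → ℕ) (S : Set V) : Prop :=
  (SimpleGraph.fromRel (fun v w : S => 0 < ε v.1 w.1)).Connected

/-- `ℤ[V]`, the span of the all-ones vector `[V]` in `ℤ^V`. -/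
def onesSub (V : Type*) : Submodule ℤ (V → ℤ) :=
  Submodule.span ℤ ({fun _ => (1 : ℤ)} : Set (V → ℤ))

/-- The characteristic vector `[R] ∈ ℤ^V` of a finite set of vertices. -/
def chiF {V : Type*} [DecidableEq V] (R : Finset V) : V → ℤ :=
  fun v => if v ∈ R then 1 else 0

/-- Irreducibility, in the graph lattice `Λ(G) = ℤ^V/ℤ[V]`, of the class of
`z : ℤ^V`, stated on representatives: the class of `z` cannot be written as
`x + y` with `x, y` nonzero classes and `x·y ≥ 0`. -/
def gIrredRep {V : Type*} [Fintype V] [DecidableEq V] (ε : V → V → ℕ) (z : V → ℤ) : Prop :=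
  ¬ ∃ x y : V → ℤ, x ∉ onesSub V ∧ y ∉ onesSub V ∧
      z - (x + y) ∈ onesSub V ∧ 0 ≤ gform ε x y

section G
variable {V : Type*} [Fintype V] [DecidableEq V] (ε : V → V → ℕ)
  (hsymm : ∀ v w, ε v w = ε w v) (hloop : ∀ v, ε v v = 0)

include hloop in
lemma gform_eq (x y : V → ℤ) :
    gform ε x y = (∑ v, ∑ w, (ε v w : ℤ) * (x v * y v)) -
      ∑ v, ∑ w, (ε v w : ℤ) * (x v * y w) := by
  unfold gform
  congr 1
  · exact Finset.sum_congr rfl fun v _ => by rw [Finset.sum_mul]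
  · refine Finset.sum_congr rfl fun v _ => ?_
    rw [← Finset.sum_filter_add_sum_filter_not Finset.univ (· ≠ v)
      (fun w => (ε v w : ℤ) * (x v * y w))]
    have : ∑ w ∈ Finset.univ.filter (fun w => ¬ w ≠ v),
        (ε v w : ℤ) * (x v * y w) = 0 := by
      apply Finset.sum_eq_zero
      intro w hw
      simp only [Finset.mem_filter, not_not] at hw
      rw [hw.2, hloop v]; simp
    omega

include hsymm hloop in
lemma two_gform (x y : V → ℤ) :
    2 * gform ε x y = ∑ v, ∑ w, (ε v w : ℤ) * ((x v - x w) * (y v - y w)) := by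
  rw [gform_eq ε hloop]
  have hswap : ∀ f : V → V → ℤ, ∑ v, ∑ w, (ε v w : ℤ) * f v w
      = ∑ v, ∑ w, (ε v w : ℤ) * f w v := by
    intro f
    rw [Finset.sum_comm]
    exact Finset.sum_congr rfl fun v _ => Finset.sum_congr rfl fun w _ => by
      rw [hsymm v w]
  have e1 : ∑ v, ∑ w, (ε v w : ℤ) * ((x v - x w) * (y v - y w))
      = (∑ v, ∑ w, (ε v w : ℤ) * (x v * y v)) - (∑ v, ∑ w, (ε v w : ℤ) * (x v * y w))
        - (∑ v, ∑ w, (ε v w : ℤ) * (x w * y v)) + (∑ v, ∑ w, (ε v w : ℤ) * (x w * y w)) := by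
    rw [← Finset.sum_sub_distrib, ← Finset.sum_sub_distrib, ← Finset.sum_add_distrib]
    refine Finset.sum_congr rfl fun v _ => ?_
    rw [← Finset.sum_sub_distrib, ← Finset.sum_sub_distrib, ← Finset.sum_add_distrib]
    exact Finset.sum_congr rfl fun w _ => by ring
  rw [e1, hswap (fun a b => x a * y b), ← hswap (fun a b => x a * y a)]
  ring

include hsymm hloop in
lemma gform_chi_bound (R : Finset V) (y : V → ℤ) :
    |gform ε (chiF R) y| ≤ gform ε y y := by
  have h2 : 2 * |gform ε (chiF R) y| ≤ 2 * gform ε y y := by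
    rw [two_gform ε hsymm hloop y y]
    calc 2 * |gform ε (chiF R) y| = |2 * gform ε (chiF R) y| := by
          rw [abs_mul]; simp
      _ = |∑ v, ∑ w, (ε v w : ℤ) * ((chiF R v - chiF R w) * (y v - y w))| := by
          rw [two_gform ε hsymm hloop]
      _ ≤ ∑ v, |∑ w, (ε v w : ℤ) * ((chiF R v - chiF R w) * (y v - y w))| :=
          Finset.abs_sum_le_sum_abs _ _
      _ ≤ ∑ v, ∑ w, |(ε v w : ℤ) * ((chiF R v - chiF R w) * (y v - y w))| :=
          Finset.sum_le_sum fun v _ => Finset.abs_sum_le_sum_abs _ _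
      _ ≤ ∑ v, ∑ w, (ε v w : ℤ) * ((y v - y w) * (y v - y w)) := by
          refine Finset.sum_le_sum fun v _ => Finset.sum_le_sum fun w _ => ?_
          rw [abs_mul, abs_mul]
          have hc : |chiF R v - chiF R w| ≤ 1 := by
            unfold chiF; split_ifs <;> simp
          have he : |(ε v w : ℤ)| = (ε v w : ℤ) := abs_of_nonneg (Int.natCast_nonneg _)
          have hy : |y v - y w| ≤ (y v - y w) * (y v - y w) := by
            nlinarith [abs_nonneg (y v - y w), sq_abs (y v - y w), abs_nonneg (y v - y w)]
          calc |(ε v w : ℤ)| * (|chiF R v - chiF R w| * |y v - y w|)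
              ≤ |(ε v w : ℤ)| * (1 * |y v - y w|) := by
                apply mul_le_mul_of_nonneg_left _ (abs_nonneg _)
                apply mul_le_mul_of_nonneg_right hc (abs_nonneg _)
            _ = (ε v w : ℤ) * |y v - y w| := by rw [he]; ring
            _ ≤ (ε v w : ℤ) * ((y v - y w) * (y v - y w)) :=
                mul_le_mul_of_nonneg_left hy (Int.natCast_nonneg _)
  linarith

end G

-- dot lemmas
lemma dot_comm {ι : Type*} [Fintype ι] (x y : ι → ℤ) : dot x y = dot y x := by
  unfold dot; exact Finset.sum_congr rfl fun i _ => mul_comm _ _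

lemma dot_add_left {ι : Type*} [Fintype ι] (x y z : ι → ℤ) :
    dot (x + y) z = dot x z + dot y z := by
  unfold dot; rw [← Finset.sum_add_distrib]
  exact Finset.sum_congr rfl fun i _ => by simp [add_mul]

lemma dot_sub_left {ι : Type*} [Fintype ι] (x y z : ι → ℤ) :
    dot (x - y) z = dot x z - dot y z := by
  unfold dot; rw [← Finset.sum_sub_distrib]
  exact Finset.sum_congr rfl fun i _ => by simp [sub_mul]

lemma dot_sum_left {ι κ : Type*} [Fintype ι] (S : Finset κ) (f : κ → ι → ℤ) (z : ι → ℤ) :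
    dot (∑ k ∈ S, f k) z = ∑ k ∈ S, dot (f k) z := by
  unfold dot; rw [Finset.sum_comm]
  exact Finset.sum_congr rfl fun i _ => by simp [Finset.sum_mul]

lemma dot_single {ι : Type*} [Fintype ι] [DecidableEq ι] (a : ι) (z : ι → ℤ) :
    dot (Pi.single a 1) z = z a := by
  unfold dot
  rw [Finset.sum_eq_single a]
  · simp
  · intro b _ hb; rw [Pi.single_eq_of_ne hb]; ring
  · simp

def emap (s : ℕ) (j : ℕ) : Fin (s + 1) := ⟨j % (s + 1), Nat.mod_lt _ (Nat.succ_pos s)⟩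

lemma emap_val {s j : ℕ} (h : j ≤ s) : ((emap s j : Fin (s+1)) : ℕ) = j :=
  Nat.mod_eq_of_lt (by omega)

section Chain

variable (t s l : ℕ) (σ : Fin t → ℤ) (m : ℕ → ℕ) (ht : 0 < t)

/-- chain test vector: e_{m_0} + ... + e_{m_{K-1}} + e_{jx} - f_1 -/
def zchain (K jx : ℕ) : Fin t ⊕ Fin (s + 1) → ℤ :=
  (∑ i ∈ Finset.range K, Pi.single (Sum.inr (emap s (m i))) 1)
    + Pi.single (Sum.inr (emap s jx)) 1 - Pi.single (Sum.inl ⟨0, ht⟩) 1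

lemma dot_zchain (K jx : ℕ) (x : Fin t ⊕ Fin (s + 1) → ℤ) :
    dot (zchain t s m ht K jx) x =
      (∑ i ∈ Finset.range K, x (Sum.inr (emap s (m i))))
        + x (Sum.inr (emap s jx)) - x (Sum.inl ⟨0, ht⟩) := by
  unfold zchain
  rw [dot_sub_left, dot_add_left, dot_sum_left, dot_single, dot_single]
  congr 1
  congr 1
  exact Finset.sum_congr rfl fun i _ => dot_single _ _


lemma m_mono (l : ℕ) (m : ℕ → ℕ) (hmlt : ∀ k, 1 ≤ k → k ≤ l → m (k - 1) < m k) :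
    ∀ i k, i ≤ k → k ≤ l → m i ≤ m k := by
  intro i k hik hkl
  induction k with
  | zero => exact Nat.le_of_eq (congrArg m (by omega))
  | succ K ih =>
    rcases Nat.lt_succ_iff_lt_or_eq.mp (Nat.lt_succ_of_le hik) with hc | hc
    · have h1 := ih (by omega) (by omega)
      have h2 := hmlt (K + 1) (by omega) hkl
      simp only [Nat.add_sub_cancel] at h2
      omega
    · exact Nat.le_of_eq (congrArg m hc)

lemma m_strict (l : ℕ) (m : ℕ → ℕ) (hmlt : ∀ k, 1 ≤ k → k ≤ l → m (k - 1) < m k) :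
    ∀ i k, i < k → k ≤ l → m i < m k := by
  intro i k hik hkl
  have h1 : m i ≤ m (k - 1) := m_mono l m hmlt i (k - 1) (by omega) (by omega)
  have h2 := hmlt k (by omega) hkl
  omega

lemma m_le_s (s l : ℕ) (m : ℕ → ℕ) (hmlt : ∀ k, 1 ≤ k → k ≤ l → m (k - 1) < m k)
    (hs : s = m l) : ∀ i, i ≤ l → m i ≤ s := by
  intro i hi; rw [hs]; exact m_mono l m hmlt i l hi le_rfl

lemma zchain_mem (t s l : ℕ) (σ : Fin t → ℤ) (m : ℕ → ℕ) (ht : 0 < t)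
    (hm0 : m 0 = 0) (hmlt : ∀ k, 1 ≤ k → k ≤ l → m (k - 1) < m k) (hs : s = m l)
    (hσ10 : σ ⟨0, ht⟩ = 1) (K jx : ℕ) (hK : K ≤ l)
    (hjlow : 1 ≤ K → m (K - 1) < jx) (hK0 : K = 0 → l = 0 ∧ jx = 0)
    (hjhigh : jx ≤ m K) (hjtop : jx = m K → K = l) :
    zchain t s m ht K jx ∈ Lset t s l σ m := by
  have hms : ∀ i, i ≤ l → m i ≤ s := m_le_s s l m hmlt hs
  have hjs : jx ≤ s := le_trans hjhigh (hms K hK)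
  intro r hrl
  rw [dot_zchain]
  rcases Nat.eq_zero_or_pos r with hr0 | hr1
  · -- r = 0 : pairing with w0
    subst hr0
    have hwvec : wvec t s σ m 0 = w0 t s σ := by simp [wvec]
    rw [hwvec]
    have hval : ∀ jn : ℕ, jn ≤ s →
        (w0 t s σ) (Sum.inr (emap s jn)) = if jn = 0 then 1 else 0 := by
      intro jn hj; simp only [w0, Sum.elim_inr, emap_val hj]
    have hptw : ∀ i ∈ Finset.range K,
        (w0 t s σ) (Sum.inr (emap s (m i))) = if i = 0 then 1 else 0 := by
      intro i hi
      rw [Finset.mem_range] at hi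
      rw [hval (m i) (hms i (by omega))]
      by_cases hi0 : i = 0
      · subst hi0; simp [hm0]
      · have : 0 < m i := by
          have := m_strict l m hmlt 0 i (by omega) (by omega)
          omega
        rw [if_neg (by omega), if_neg hi0]
    rw [Finset.sum_congr rfl hptw, Finset.sum_ite_eq' (Finset.range K) 0 (fun _ => (1:ℤ))]
    rw [hval jx hjs]
    have hfl : (w0 t s σ) (Sum.inl ⟨0, ht⟩) = 1 := hσ10
    rw [hfl]
    rcases Nat.eq_zero_or_pos K with hK0' | hK1
    · obtain ⟨hl0, hjx0⟩ := hK0 hK0'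
      subst hK0'
      simp [hjx0]
    · have hjne : jx ≠ 0 := by
        have := hjlow hK1; omega
      rw [if_pos (Finset.mem_range.mpr hK1), if_neg hjne]
      ring
  · -- r ≥ 1 : pairing with wk r
    have hwvec : wvec t s σ m r = wk t s m r := by simp [wvec, Nat.pos_iff_ne_zero.mp hr1]
    rw [hwvec]
    have hK1 : 1 ≤ K := by
      by_contra hc
      obtain ⟨hl0, _⟩ := hK0 (by omega)
      omega
    have hval : ∀ jn : ℕ, jn ≤ s → (wk t s m r) (Sum.inr (emap s jn)) =
        if jn = m (r - 1) then -1
        else if m (r - 1) < jn ∧ jn ≤ m r then 1 else 0 := by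
      intro jn hj; simp [wk, emap_val hj]
    have hptw : ∀ i ∈ Finset.range K, (wk t s m r) (Sum.inr (emap s (m i))) =
        (if i = r - 1 then (-1 : ℤ) else 0) + (if i = r then 1 else 0) := by
      intro i hi
      rw [Finset.mem_range] at hi
      have hil : i ≤ l := by omega
      rw [hval (m i) (hms i hil)]
      by_cases hir1 : i = r - 1
      · rw [if_pos (by rw [hir1]), if_pos hir1, if_neg (by omega)]; ring
      · have hne : m i ≠ m (r - 1) := by
          rcases Nat.lt_trichotomy i (r - 1) with hc | hc | hc
          · have := m_strict l m hmlt i (r - 1) hc (by omega); omega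
          · exact absurd hc hir1
          · have := m_strict l m hmlt (r - 1) i hc hil; omega
        rw [if_neg hne, if_neg hir1]
        by_cases hir : i = r
        · rw [if_pos ⟨by rw [hir]; exact hmlt r hr1 hrl, by rw [hir]⟩, if_pos hir]; ring
        · rw [if_neg ?_, if_neg hir]
          · ring
          · rintro ⟨hc1, hc2⟩
            rcases Nat.lt_trichotomy i r with hc | hc | hc
            · have hir1' : i < r - 1 := by omega
              have := m_strict l m hmlt i (r - 1) hir1' (by omega); omega
            · exact hir hc
            · have := m_strict l m hmlt r i hc hil; omega
    rw [Finset.sum_congr rfl hptw, Finset.sum_add_distrib,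
      Finset.sum_ite_eq' (Finset.range K) (r - 1) (fun _ => (-1 : ℤ)),
      Finset.sum_ite_eq' (Finset.range K) r (fun _ => (1 : ℤ))]
    have hjxval : (wk t s m r) (Sum.inr (emap s jx)) = if r = K then 1 else 0 := by
      rw [hval jx hjs]
      have hne : jx ≠ m (r - 1) := by
        intro hc
        rcases Nat.lt_trichotomy (r - 1) K with hd | hd | hd
        · have : m (r - 1) ≤ m (K - 1) :=
            m_mono l m hmlt (r - 1) (K - 1) (by omega) (by omega)
          have := hjlow hK1; omega
        · have : K = l := hjtop (hc.trans (congrArg m hd))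
          omega
        · have : m K < m (r - 1) := m_strict l m hmlt K (r - 1) hd (by omega)
          omega
      rw [if_neg hne]
      by_cases hrK : r = K
      · rw [if_pos ⟨by rw [hrK]; exact hjlow hK1, by rw [hrK]; exact hjhigh⟩, if_pos hrK]
      · rw [if_neg ?_, if_neg hrK]
        rintro ⟨hc1, hc2⟩
        rcases Nat.lt_trichotomy r K with hd | hd | hd
        · have : m r ≤ m (K - 1) := m_mono l m hmlt r (K - 1) (by omega) (by omega)
          have := hjlow hK1; omega
        · exact hrK hd
        · have : m K ≤ m (r - 1) := m_mono l m hmlt K (r - 1) (by omega) (by omega)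
          omega
    rw [hjxval]
    have hfl : (wk t s m r) (Sum.inl ⟨0, ht⟩) = 0 := rfl
    rw [hfl]
    have h1 : r - 1 ∈ Finset.range K ↔ r - 1 < K := Finset.mem_range
    have h2 : r ∈ Finset.range K ↔ r < K := Finset.mem_range
    split_ifs with a b c <;> simp_all <;> omega


lemma emap_ne {s a b : ℕ} (ha : a ≤ s) (hb : b ≤ s) (hab : a ≠ b) :
    emap s a ≠ emap s b := by
  intro hc
  have := congrArg Fin.val hc
  rw [emap_val ha, emap_val hb] at this
  exact hab this

lemma zchain_norm (t s l : ℕ) (m : ℕ → ℕ) (ht : 0 < t)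
    (hmlt : ∀ k, 1 ≤ k → k ≤ l → m (k - 1) < m k) (hs : s = m l)
    (K jx : ℕ) (hK : K ≤ l)
    (hjlow : 1 ≤ K → m (K - 1) < jx) (hK0 : K = 0 → l = 0 ∧ jx = 0)
    (hjhigh : jx ≤ m K) :
    dot (zchain t s m ht K jx) (zchain t s m ht K jx) = (K : ℤ) + 2 := by
  have hms : ∀ i, i ≤ l → m i ≤ s := m_le_s s l m hmlt hs
  have hjs : jx ≤ s := le_trans hjhigh (hms K hK)
  have hjne : ∀ i, i < K → jx ≠ m i := by
    intro i hi hc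
    have h1 : m i ≤ m (K - 1) := m_mono l m hmlt i (K - 1) (by omega) (by omega)
    have h2 := hjlow (by omega)
    omega
  have happly_inr : ∀ j : Fin (s + 1), zchain t s m ht K jx (Sum.inr j) =
      (∑ i ∈ Finset.range K, if j = emap s (m i) then (1:ℤ) else 0)
        + (if j = emap s jx then 1 else 0) := by
    intro j
    unfold zchain
    simp [Finset.sum_apply, Pi.single_apply]
  have happly_inl : zchain t s m ht K jx (Sum.inl ⟨0, ht⟩) = -1 := by
    unfold zchain
    simp [Finset.sum_apply, Pi.single_apply]
  rw [dot_zchain]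
  have hterm : ∀ i ∈ Finset.range K,
      zchain t s m ht K jx (Sum.inr (emap s (m i))) = 1 := by
    intro i hi
    rw [Finset.mem_range] at hi
    rw [happly_inr]
    have h1 : ∑ i' ∈ Finset.range K,
        (if emap s (m i) = emap s (m i') then (1:ℤ) else 0) = 1 := by
      rw [Finset.sum_eq_single_of_mem i (Finset.mem_range.mpr hi)]
      · simp
      · intro i' hi' hne
        rw [Finset.mem_range] at hi'
        rw [if_neg]
        apply emap_ne (hms _ (by omega)) (hms _ (by omega))
        intro hc
        rcases Nat.lt_trichotomy i i' with hd | hd | hd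
        · have := m_strict l m hmlt i i' hd (by omega); omega
        · exact hne hd.symm
        · have := m_strict l m hmlt i' i hd (by omega); omega
    rw [h1, if_neg]
    · ring
    · exact emap_ne (hms _ (by omega)) hjs (fun hc => hjne i hi hc.symm)
  rw [Finset.sum_congr rfl hterm]
  have hjterm : zchain t s m ht K jx (Sum.inr (emap s jx)) = 1 := by
    rw [happly_inr]
    have h1 : ∑ i' ∈ Finset.range K,
        (if emap s jx = emap s (m i') then (1:ℤ) else 0) = 0 := by
      apply Finset.sum_eq_zero
      intro i' hi'
      rw [Finset.mem_range] at hi'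
      exact if_neg (emap_ne hjs (hms _ (by omega)) (hjne i' hi'))
    rw [h1, if_pos rfl]
    ring
  rw [hjterm, happly_inl]
  simp
  ring

section Fonly

variable (t s l : ℕ) (σ : Fin t → ℤ) (m : ℕ → ℕ)

def fonly (c : Fin t → ℤ) : Fin t ⊕ Fin (s + 1) → ℤ := Sum.elim c 0

lemma dot_fonly (c : Fin t → ℤ) (x : Fin t ⊕ Fin (s + 1) → ℤ) :
    dot (fonly t s c) x = ∑ i, c i * x (Sum.inl i) := by
  unfold dot fonly
  rw [Fintype.sum_sum_type]
  simp

lemma fonly_mem (c : Fin t → ℤ) (hc : ∑ i, c i * σ i = 0) :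
    fonly t s c ∈ Lset t s l σ m := by
  intro k hk
  rcases Nat.eq_zero_or_pos k with h0 | h1
  · subst h0
    have : wvec t s σ m 0 = w0 t s σ := by simp [wvec]
    rw [this, dot_fonly]
    exact hc
  · have : wvec t s σ m k = wk t s m k := by simp [wvec, Nat.pos_iff_ne_zero.mp h1]
    rw [this, dot_fonly]
    apply Finset.sum_eq_zero
    intro i _
    have : wk t s m k (Sum.inl i) = 0 := rfl
    rw [this, mul_zero]

end Fonly

lemma cm_subset' {t : ℕ} (σ : Fin t → ℤ) (hσ0 : ∀ i, 0 ≤ σ i)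
    (hσcm : ∀ i : Fin t, σ i ≤ (∑ j ∈ Finset.univ.filter (· < i), σ j) + 1) :
    ∀ N : ℕ, ∀ g : ℤ, 0 ≤ g →
      g ≤ ∑ j ∈ Finset.univ.filter (fun j : Fin t => (j : ℕ) < N), σ j →
      ∃ A ⊆ Finset.univ.filter (fun j : Fin t => (j : ℕ) < N), ∑ j ∈ A, σ j = g := by
  intro N
  induction N with
  | zero =>
    intro g hg0 hg1
    have : Finset.univ.filter (fun j : Fin t => (j : ℕ) < 0) = ∅ := by
      apply Finset.filter_false_of_mem; intro j _; omega
    rw [this] at hg1; simp at hg1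
    refine ⟨∅, by simp, by simp; omega⟩
  | succ N ih =>
    intro g hg0 hg1
    by_cases hN : N < t
    · set i : Fin t := ⟨N, hN⟩ with hi
      have hsplit : Finset.univ.filter (fun j : Fin t => (j : ℕ) < N + 1)
          = insert i (Finset.univ.filter (fun j : Fin t => (j : ℕ) < N)) := by
        ext j
        simp only [Finset.mem_filter, Finset.mem_insert, Finset.mem_univ, true_and]
        constructor
        · intro hj
          rcases Nat.lt_succ_iff_lt_or_eq.mp hj with h | h
          · exact Or.inr h
          · exact Or.inl (Fin.ext h)
        · rintro (h | h)
          · rw [h, hi]; simp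
          · omega
      have hnotmem : i ∉ Finset.univ.filter (fun j : Fin t => (j : ℕ) < N) := by
        simp [hi]
      have hsum : ∑ j ∈ Finset.univ.filter (fun j : Fin t => (j : ℕ) < N + 1), σ j
          = σ i + ∑ j ∈ Finset.univ.filter (fun j : Fin t => (j : ℕ) < N), σ j := by
        rw [hsplit, Finset.sum_insert hnotmem]
      have hfiltereq : Finset.univ.filter (· < i)
          = Finset.univ.filter (fun j : Fin t => (j : ℕ) < N) := by
        apply Finset.filter_congr; intro j _; simp [Fin.lt_def, hi]
      by_cases hc : g ≤ ∑ j ∈ Finset.univ.filter (fun j : Fin t => (j : ℕ) < N), σ j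
      · obtain ⟨A, hA1, hA2⟩ := ih g hg0 hc
        refine ⟨A, hA1.trans ?_, hA2⟩
        rw [hsplit]; exact Finset.subset_insert _ _
      · push_neg at hc
        have hcm := hσcm i
        rw [hfiltereq] at hcm
        obtain ⟨A, hA1, hA2⟩ := ih (g - σ i) (by omega) (by rw [hsum] at hg1; omega)
        refine ⟨insert i A, ?_, ?_⟩
        · rw [hsplit]; exact Finset.insert_subset_insert _ hA1
        · rw [Finset.sum_insert (fun hmem => hnotmem (hA1 hmem))]; omega
    · push_neg at hN
      have heq : Finset.univ.filter (fun j : Fin t => (j : ℕ) < N + 1)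
          = Finset.univ.filter (fun j : Fin t => (j : ℕ) < N) := by
        apply Finset.filter_congr; intro j _
        have := j.isLt; omega
      rw [heq] at hg1 ⊢
      exact ih g hg0 hg1

set_option maxRecDepth 8000 in
set_option maxHeartbeats 1000000 in
lemma core (t s l : ℕ) (σ : Fin t → ℤ) (m : ℕ → ℕ) (ht : 0 < t)
    (hσ1 : ∀ i, 1 ≤ σ i)
    (hσcm : ∀ i : Fin t, σ i ≤ (∑ j ∈ Finset.univ.filter (· < i), σ j) + 1)
    (hm0 : m 0 = 0) (hmlt : ∀ k, 1 ≤ k → k ≤ l → m (k - 1) < m k) (hs : s = m l)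
    (x : Fin t ⊕ Fin (s + 1) → ℤ)
    (hxmem : x ∈ Lset t s l σ m)
    (hbd : ∀ z ∈ Lset t s l σ m, |dot x z| ≤ dot z z) :
    x (Sum.inl ⟨0, ht⟩) ≤ 2 := by
  by_contra hcon
  push_neg at hcon
  have hx3 : 3 ≤ x (Sum.inl ⟨0, ht⟩) := hcon
  set i0 : Fin t := ⟨0, ht⟩ with hi0
  set X : Fin t → ℤ := fun i => x (Sum.inl i) with hX
  have hvi0 : (i0 : ℕ) = 0 := rfl
  have hσ10 : σ i0 = 1 := by
    have h1 := hσcm i0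
    have h2 : Finset.univ.filter (· < i0) = ∅ := by
      apply Finset.filter_false_of_mem
      intro j _
      simp [Fin.lt_def, hi0]
    rw [h2] at h1
    simp at h1
    have := hσ1 i0
    omega
  -- all f-coordinates are ≥ 1
  have hXpos : ∀ N : ℕ, ∀ i : Fin t, (i : ℕ) = N → 1 ≤ X i := by
    intro N
    induction N using Nat.strong_induction_on with
    | _ N ih =>
      intro i hiN
      rcases Nat.eq_zero_or_pos N with hN0 | hN1
      · have : i = i0 := Fin.ext (by omega)
        rw [this]; exact le_trans (by norm_num) hx3
      · have hii0 : i ≠ i0 := by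
          intro hc; rw [hc, hi0] at hiN; simp at hiN; omega
        have hfilt : Finset.univ.filter (· < i)
            = Finset.univ.filter (fun j : Fin t => (j : ℕ) < N) := by
          apply Finset.filter_congr; intro j _; simp [Fin.lt_def, hiN]
        have hcm := hσcm i
        rw [hfilt] at hcm
        obtain ⟨A, hA1, hA2⟩ := cm_subset' σ (fun i => le_trans (by norm_num) (hσ1 i)) hσcm N
          (σ i - 1) (by have := hσ1 i; omega) (by omega)
        have hiA : i ∉ A := by
          intro hc
          have := hA1 hc
          rw [Finset.mem_filter] at this
          omega
        set c : Fin t → ℤ := fun j =>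
          (if j = i0 then 1 else 0) + (if j ∈ A then 1 else 0) - (if j = i then 1 else 0)
          with hc
        have hsum1 : ∀ y : Fin t → ℤ, ∑ j, c j * y j =
            y i0 + (∑ j ∈ A, y j) - y i := by
          intro y
          have hexp : ∀ j : Fin t, c j * y j =
              (if j = i0 then y j else 0) + (if j ∈ A then y j else 0)
                - (if j = i then y j else 0) := by
            intro j
            simp only [hc]
            split_ifs <;> ring
          rw [Finset.sum_congr rfl (fun j _ => hexp j)]
          rw [Finset.sum_sub_distrib, Finset.sum_add_distrib]
          rw [Finset.sum_ite_eq' Finset.univ i0 y, Finset.sum_ite_eq' Finset.univ i y]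
          rw [Finset.sum_ite_mem, Finset.univ_inter]
          simp
        have hzero : ∑ j, c j * σ j = 0 := by
          rw [hsum1 σ, hσ10, hA2]; ring
        have hmem := fonly_mem t s l σ m c hzero
        have hb := hbd _ hmem
        rw [dot_comm, dot_fonly] at hb
        have hnorm : dot (fonly t s c) (fonly t s c) = ∑ j, c j * c j := by
          rw [dot_fonly]
          exact Finset.sum_congr rfl fun j _ => rfl
        rw [hnorm] at hb
        have hcc : ∑ j, c j * c j ≤ 2 + (A.card : ℤ) + (if i0 ∈ A then 2 else 0) := by
          have hexp : ∀ j : Fin t, c j * c j ≤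
              (if j = i0 then 1 else 0) + (if j ∈ A then 1 else 0) + (if j = i then 1 else 0)
                + (if j = i0 then (if i0 ∈ A then 2 else 0) else 0) := by
            intro j
            simp only [hc]
            by_cases h1 : j = i0
            · subst h1
              split_ifs <;> norm_num
            · split_ifs <;> norm_num
          calc ∑ j, c j * c j ≤ ∑ j : Fin t,
              ((if j = i0 then 1 else 0) + (if j ∈ A then 1 else 0) + (if j = i then 1 else 0)
                + (if j = i0 then (if i0 ∈ A then (2:ℤ) else 0) else 0)) :=
              Finset.sum_le_sum fun j _ => hexp j
            _ = 2 + (A.card : ℤ) + (if i0 ∈ A then 2 else 0) := by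
              rw [Finset.sum_add_distrib, Finset.sum_add_distrib, Finset.sum_add_distrib]
              rw [Finset.sum_ite_eq' Finset.univ i0 (fun _ => (1:ℤ)),
                Finset.sum_ite_eq' Finset.univ i (fun _ => (1:ℤ)),
                Finset.sum_ite_eq' Finset.univ i0
                  (fun _ => (if i0 ∈ A then (2:ℤ) else 0))]
              rw [Finset.sum_ite_mem, Finset.univ_inter, Finset.sum_const]
              simp only [Finset.mem_univ, if_true, nsmul_eq_mul, mul_one]
              ring
        have hXA : (A.card : ℤ) + (if i0 ∈ A then 2 else 0) ≤ ∑ j ∈ A, X j := by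
          have h1 : ∀ j ∈ A, 1 ≤ X j := by
            intro j hj
            have := hA1 hj
            rw [Finset.mem_filter] at this
            exact ih (j : ℕ) (by omega) j rfl
          by_cases hA0 : i0 ∈ A
          · rw [if_pos hA0]
            have h2 : ∑ j ∈ A, ((1:ℤ) + if j = i0 then 2 else 0) ≤ ∑ j ∈ A, X j := by
              apply Finset.sum_le_sum
              intro j hj
              by_cases hj0 : j = i0
              · rw [if_pos hj0, hj0]; linarith [hx3]
              · rw [if_neg hj0]; simpa using h1 j hj
            calc (A.card : ℤ) + 2 = ∑ j ∈ A, ((1:ℤ) + if j = i0 then 2 else 0) := by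
                  rw [Finset.sum_add_distrib, Finset.sum_ite_eq' A i0 (fun _ => (2:ℤ)),
                    if_pos hA0, Finset.sum_const, nsmul_eq_mul, mul_one]
              _ ≤ ∑ j ∈ A, X j := h2
          · rw [if_neg hA0]
            simp only [add_zero]
            calc (A.card : ℤ) = ∑ j ∈ A, (1:ℤ) := by
                  rw [Finset.sum_const, nsmul_eq_mul, mul_one]
              _ ≤ ∑ j ∈ A, X j := Finset.sum_le_sum h1
        rw [hsum1 X] at hb
        have habs := (abs_le.mp hb).2
        have : 3 ≤ X i0 := hx3
        linarith
  have hXpos' : ∀ i : Fin t, 1 ≤ X i := fun i => hXpos (i : ℕ) i rfl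
  -- the e_0 coordinate
  set YY : ℕ → ℤ := fun jn => x (Sum.inr (emap s jn)) with hYY
  have hY0 : YY 0 ≤ -3 := by
    have h0 := hxmem 0 (Nat.zero_le l)
    have hwvec : wvec t s σ m 0 = w0 t s σ := by simp [wvec]
    rw [hwvec] at h0
    unfold dot at h0
    rw [Fintype.sum_sum_type] at h0
    have he : ∑ j : Fin (s + 1), x (Sum.inr j) * (w0 t s σ) (Sum.inr j) = YY 0 := by
      rw [Finset.sum_eq_single (emap s 0)]
      · have : ((emap s 0 : Fin (s+1)) : ℕ) = 0 := emap_val (Nat.zero_le s)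
        simp only [w0, Sum.elim_inr, this, ↓reduceIte, mul_one, hYY]
      · intro j _ hj
        have hne : ((j : Fin (s+1)) : ℕ) ≠ 0 := by
          intro hc
          exact hj (Fin.ext (by rw [hc, emap_val (Nat.zero_le s)]))
        simp only [w0, Sum.elim_inr, hne, ↓reduceIte, mul_zero]
      · simp
    rw [he] at h0
    have hf : ∀ i : Fin t, x (Sum.inl i) * (w0 t s σ) (Sum.inl i) = X i * σ i := fun i => rfl
    rw [Finset.sum_congr rfl (fun i _ => hf i)] at h0
    have hge : 3 ≤ ∑ i, X i * σ i := by
      have h1 : X i0 * σ i0 ≤ ∑ i, X i * σ i := by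
        apply Finset.single_le_sum (f := fun i => X i * σ i) _ (Finset.mem_univ i0)
        intro i _
        exact mul_nonneg (by linarith [hXpos' i]) (by linarith [hσ1 i])
      rw [hσ10] at h1
      have := hx3
      linarith
    linarith
  have hms : ∀ i, i ≤ l → m i ≤ s := m_le_s s l m hmlt hs
  have hxfin : ∀ j : Fin (s + 1), x (Sum.inr j) = YY (j : ℕ) := by
    intro j
    have hj : emap s (j : ℕ) = j := Fin.ext (emap_val (by omega))
    calc x (Sum.inr j) = x (Sum.inr (emap s (j : ℕ))) := by rw [hj]
      _ = YY (j : ℕ) := rfl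
  have hchain : ∀ k, 1 ≤ k → k ≤ l →
      YY (m (k - 1)) = ∑ jn ∈ Finset.Ioc (m (k - 1)) (m k), YY jn := by
    intro k hk1 hkl
    have h0 := hxmem k hkl
    have hwvec : wvec t s σ m k = wk t s m k := by simp [wvec, Nat.pos_iff_ne_zero.mp hk1]
    rw [hwvec] at h0
    unfold dot at h0
    rw [Fintype.sum_sum_type] at h0
    have hfzero : ∑ i : Fin t, x (Sum.inl i) * (wk t s m k) (Sum.inl i) = 0 := by
      apply Finset.sum_eq_zero
      intro i _
      have : wk t s m k (Sum.inl i) = 0 := rfl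
      rw [this, mul_zero]
    rw [hfzero, zero_add] at h0
    have hconv : ∑ j : Fin (s + 1), x (Sum.inr j) * (wk t s m k) (Sum.inr j)
        = ∑ jn ∈ Finset.range (s + 1), YY jn *
            (if jn = m (k - 1) then -1
              else if m (k - 1) < jn ∧ jn ≤ m k then 1 else 0) := by
      rw [← Fin.sum_univ_eq_sum_range (fun jn => YY jn *
        (if jn = m (k - 1) then -1
          else if m (k - 1) < jn ∧ jn ≤ m k then 1 else 0)) (s + 1)]
      apply Finset.sum_congr rfl
      intro j _
      rw [hxfin j]
      rfl
    rw [hconv] at h0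
    have hsplitp : ∀ jn, YY jn *
        (if jn = m (k - 1) then -1
          else if m (k - 1) < jn ∧ jn ≤ m k then 1 else 0)
        = (if jn = m (k - 1) then -YY jn else 0)
          + (if m (k - 1) < jn ∧ jn ≤ m k then YY jn else 0) := by
      intro jn
      split_ifs with h1 h2
      · exfalso; omega
      · ring
      · ring
      · ring
    rw [Finset.sum_congr rfl (fun jn _ => hsplitp jn), Finset.sum_add_distrib,
      Finset.sum_ite_eq' (Finset.range (s + 1)) (m (k - 1)) (fun jn => -YY jn),
      if_pos (Finset.mem_range.mpr (by have := hms (k - 1) (by omega); omega)),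
      ← Finset.sum_filter] at h0
    have hfeq : (Finset.range (s + 1)).filter (fun jn => m (k - 1) < jn ∧ jn ≤ m k)
        = Finset.Ioc (m (k - 1)) (m k) := by
      ext jn
      simp only [Finset.mem_filter, Finset.mem_range, Finset.mem_Ioc]
      have := hms k hkl
      omega
    rw [hfeq] at h0
    linarith [h0]
  have hineq : ∀ K jx, K ≤ l → (1 ≤ K → m (K - 1) < jx) → (K = 0 → l = 0 ∧ jx = 0) →
      jx ≤ m K → (jx = m K → K = l) →
      |(∑ i ∈ Finset.range K, YY (m i)) + YY jx - x (Sum.inl i0)| ≤ (K : ℤ) + 2 := by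
    intro K jx h1 h2 h3 h4 h5
    have hmem := zchain_mem t s l σ m ht hm0 hmlt hs hσ10 K jx h1 h2 h3 h4 h5
    have hb := hbd _ hmem
    rw [dot_comm, dot_zchain,
      zchain_norm t s l m ht hmlt hs K jx h1 h2 h3 h4] at hb
    exact hb
  have hQ : ∀ k, k ≤ l → YY (m k) ≤ YY 0 ∧
      (∑ i ∈ Finset.range (k + 1), YY (m i)) ≤ ((k : ℤ) + 1) * YY 0 := by
    intro k
    induction k with
    | zero =>
      intro _
      refine ⟨by rw [hm0], ?_⟩
      rw [Finset.sum_range_one, hm0]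
      push_cast
      linarith
    | succ k ih =>
      intro hkl
      obtain ⟨hYk, hTk⟩ := ih (by omega)
      have hklt : m k < m (k + 1) := hmlt (k + 1) (by omega) hkl
      by_cases hex : ∃ jn ∈ Finset.Ioo (m k) (m (k + 1)), YY jn ≤ -1
      · exfalso
        obtain ⟨jn, hjn, hYjn⟩ := hex
        rw [Finset.mem_Ioo] at hjn
        have hi := hineq (k + 1) jn hkl (fun _ => hjn.1) (by omega)
          (by omega) (by intro hc; omega)
        have habs := (abs_le.mp hi).1
        have hmul : ((k : ℤ) + 1) * YY 0 ≤ ((k : ℤ) + 1) * (-3) :=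
          mul_le_mul_of_nonneg_left hY0 (by positivity)
        have hk0 : (0 : ℤ) ≤ (k : ℤ) := Int.natCast_nonneg k
        push_cast at habs hTk hmul ⊢
        linarith [hx3, hYk]
      · push_neg at hex
        have hpos : ∀ jn ∈ Finset.Ioo (m k) (m (k + 1)), 0 ≤ YY jn := by
          intro jn hjn
          have := hex jn hjn
          omega
        have hEq := hchain (k + 1) (by omega) hkl
        have hsplit : ∑ jn ∈ Finset.Ioc (m k) (m (k + 1)), YY jn
            = YY (m (k + 1)) + ∑ jn ∈ Finset.Ioo (m k) (m (k + 1)), YY jn := by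
          rw [← Finset.Ioo_insert_right hklt, Finset.sum_insert (by simp)]
        have hnn : 0 ≤ ∑ jn ∈ Finset.Ioo (m k) (m (k + 1)), YY jn :=
          Finset.sum_nonneg hpos
        have hEq' : YY (m k) = YY (m (k + 1)) + ∑ jn ∈ Finset.Ioo (m k) (m (k + 1)), YY jn := by
          rw [← hsplit]
          exact hEq
        have hYk1 : YY (m (k + 1)) ≤ YY 0 := by linarith
        refine ⟨hYk1, ?_⟩
        rw [Finset.sum_range_succ]
        push_cast
        push_cast at hTk
        linarith
  obtain ⟨-, hT⟩ := hQ l le_rfl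
  have hfull := hineq l (m l) le_rfl (fun hl => hmlt l hl le_rfl)
    (fun h0 => ⟨h0, by rw [h0]; exact hm0⟩) le_rfl (fun _ => rfl)
  rw [Finset.sum_range_succ] at hT
  have habs := (abs_le.mp hfull).1
  have hmul : ((l : ℤ) + 1) * YY 0 ≤ ((l : ℤ) + 1) * (-3) :=
    mul_le_mul_of_nonneg_left hY0 (by positivity)
  have hl0 : (0 : ℤ) ≤ (l : ℤ) := Int.natCast_nonneg l
  push_cast at hT hmul habs
  linarith [hx3]

/-- Part of Lemma 6.9 of the paper: if the graph lattice `Λ(G)` of a connected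
multigraph `G` is isomorphic (via `φ`, stated on representatives) to a
`p/q`-changemaker lattice `L` with all `σ_i ≥ 1`, then any sum of vertices
`x = ι(Σ_{u∈R} ū)` satisfies `|x·f_1| ≤ 2`. -/
theorem stmt_13 (p q n r : ℤ) (t s l : ℕ) (a : ℕ → ℤ) (m : ℕ → ℕ) (σ : Fin t → ℤ)
    (h : IsCMLattice p q n r t s l a m σ) (hσ1 : ∀ i, 1 ≤ σ i) (ht : 0 < t)
    {V : Type*} [Fintype V] [DecidableEq V] (ε : V → V → ℕ)
    (hcard : 2 ≤ Fintype.card V)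
    (hsymm : ∀ v w, ε v w = ε w v) (hloop : ∀ v, ε v v = 0)
    (hconn : (gGraph ε).Connected)
    (φ : (V → ℤ) → (Fin t ⊕ Fin (s + 1) → ℤ))
    (hφadd : ∀ x y, φ (x + y) = φ x + φ y)
    (hφones : φ (fun _ => 1) = 0)
    (hφker : ∀ x, φ x = 0 → x ∈ onesSub V)
    (hφimg : ∀ x, φ x ∈ Lset t s l σ m)
    (hφsurj : ∀ z ∈ Lset t s l σ m, ∃ x, φ x = z)
    (hφform : ∀ x y, dot (φ x) (φ y) = gform ε x y)
    (R : Finset V) :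
    |dot (φ (chiF R)) (fvec t s ⟨0, ht⟩)| ≤ 2 := by
  have hmlt : ∀ k, 1 ≤ k → k ≤ l → m (k - 1) < m k := by
    intro k hk1 hkl
    have h1 := h.hmrec k hk1 hkl
    have h2 := h.hak k hk1 hkl
    omega
  have key : ∀ R' : Finset V, (φ (chiF R')) (Sum.inl ⟨0, ht⟩) ≤ 2 := by
    intro R'
    apply core t s l σ m ht hσ1 h.hσcm h.hm0 hmlt h.hs (φ (chiF R')) (hφimg _)
    intro z hz
    obtain ⟨ζ, hζ⟩ := hφsurj z hz
    rw [← hζ, hφform, hφform]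
    exact gform_chi_bound ε hsymm hloop R' ζ
  have hxval : dot (φ (chiF R)) (fvec t s ⟨0, ht⟩) = (φ (chiF R)) (Sum.inl ⟨0, ht⟩) := by
    rw [dot_comm]; exact dot_single _ _
  have hneg : φ (chiF (Finset.univ \ R)) = - φ (chiF R) := by
    have hsum : chiF R + chiF (Finset.univ \ R) = (fun _ => (1 : ℤ)) := by
      funext v
      simp only [Pi.add_apply, chiF, Finset.mem_sdiff, Finset.mem_univ, true_and]
      by_cases hv : v ∈ R <;> simp [hv]
    have h2 := hφadd (chiF R) (chiF (Finset.univ \ R))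
    rw [hsum, hφones] at h2
    have h3 : φ (chiF R) + φ (chiF (Finset.univ \ R)) = 0 := h2.symm
    exact eq_neg_of_add_eq_zero_right h3
  rw [hxval, abs_le]
  constructor
  · have h2 := key (Finset.univ \ R)
    rw [hneg] at h2
    have h3 : (-φ (chiF R)) (Sum.inl ⟨0, ht⟩) = - (φ (chiF R)) (Sum.inl ⟨0, ht⟩) := rfl
    rw [h3] at h2
    linarith
  · exact key R
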